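/- Let E be a nonempty finite set, Q : E × E → ℝ a transition rate matrix (Q(x,y) ≥ 0 for x ≠ y, Σ_y Q(x,y) = 0 for all x), μ : E → ℝ a probability vector, and κ : E → ℝ a function with κ(x) ≥ κ̲ for all x, for some constant κ̲ > 0. Define L(x,y) := Q(x,y) + κ(x)·(μ(y) − 1{x = y}). Then there exists a probability vector π on E such that π · exp(tL) = π for all t ≥ 0, and for every probability vector ν on E and every t ≥ 0, Σ_y | (ν · exp(tL))(y) − π(y) | ≤ 2 e^{−t κ̲}. -/

import Mathlib

open Matrix Topology Filter

set_option linter.unusedSectionVars false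

section RestoreHelpers

open NormedSpace

variable {E : Type*} [Fintype E] [DecidableEq E] [Nonempty E]

private lemma restore_matExpSummable (M : Matrix E E ℝ) :
    Summable (fun n : ℕ => (n.factorial : ℝ)⁻¹ • M ^ n) := by
  letI : NormedRing (Matrix E E ℝ) := Matrix.linftyOpNormedRing
  letI : NormedAlgebra ℝ (Matrix E E ℝ) := Matrix.linftyOpNormedAlgebra
  exact expSeries_summable' M

private lemma restore_clm_exp {F : Type*} [NormedAddCommGroup F] [NormedSpace ℝ F]
    [CompleteSpace F] (f : Matrix E E ℝ →ₗ[ℝ] F) (M : Matrix E E ℝ) :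
    f (exp M) = ∑' n : ℕ, f ((n.factorial : ℝ)⁻¹ • M ^ n) := by
  rw [exp_eq_tsum ℝ]
  exact (LinearMap.toContinuousLinearMap f).map_tsum (restore_matExpSummable M)

private lemma restore_exp_entry (M : Matrix E E ℝ) (x y : E) :
    exp M x y = ∑' n : ℕ, (n.factorial : ℝ)⁻¹ * ((M ^ n) x y) := by
  have := restore_clm_exp (F := ℝ)
    { toFun := fun N => N x y
      map_add' := fun a b => rfl
      map_smul' := fun c a => rfl } M
  exact this

private lemma restore_vecMul_exp (w : E → ℝ) (M : Matrix E E ℝ) :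
    w ᵥ* exp M = ∑' n : ℕ, (n.factorial : ℝ)⁻¹ • (w ᵥ* M ^ n) := by
  have := restore_clm_exp (F := E → ℝ)
    { toFun := fun N => w ᵥ* N
      map_add' := fun a b => Matrix.vecMul_add a b w
      map_smul' := by
        intro c a
        ext j
        simp [Matrix.vecMul, dotProduct, Finset.mul_sum, mul_left_comm] } M
  convert this using 2 with n
  ext j
  simp [Matrix.vecMul, dotProduct, Finset.mul_sum, mul_left_comm]
  · rfl
  · rfl
  · funext n; ext j; simp [Matrix.vecMul, dotProduct, Finset.mul_sum, mul_left_comm]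

private lemma restore_mulVec_exp (M : Matrix E E ℝ) (v : E → ℝ) :
    exp M *ᵥ v = ∑' n : ℕ, (n.factorial : ℝ)⁻¹ • (M ^ n *ᵥ v) := by
  have := restore_clm_exp (F := E → ℝ)
    { toFun := fun N => N *ᵥ v
      map_add' := fun a b => Matrix.add_mulVec a b v
      map_smul' := by
        intro c a
        ext i
        simp [Matrix.mulVec, dotProduct, Finset.mul_sum, mul_assoc] } M
  convert this using 2 with n
  ext i
  simp [Matrix.mulVec, dotProduct, Finset.mul_sum, mul_assoc]
  · rfl
  · rfl
  · funext n; ext i; simp [Matrix.mulVec, dotProduct, Finset.mul_sum, mul_assoc]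

private lemma restore_exp_smul_one (s : ℝ) :
    exp (s • (1 : Matrix E E ℝ)) = Real.exp s • (1 : Matrix E E ℝ) := by
  have h1 : s • (1 : Matrix E E ℝ) = Matrix.diagonal (fun _ => s) := by
    ext i j
    by_cases h : i = j <;> simp [Matrix.diagonal, h, Matrix.one_apply]
  rw [h1, Matrix.exp_diagonal]
  ext i j
  by_cases h : i = j <;>
    simp [Matrix.diagonal, h, Matrix.one_apply, ← Real.exp_eq_exp_ℝ]

private lemma restore_pow_entry_nonneg {M : Matrix E E ℝ} (h : ∀ x y, 0 ≤ M x y) (n : ℕ) :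
    ∀ x y, 0 ≤ (M ^ n) x y := by
  induction n with
  | zero => intro x y; by_cases hxy : x = y <;> simp [Matrix.one_apply, hxy]
  | succ n ih =>
    intro x y
    rw [pow_succ, Matrix.mul_apply]
    exact Finset.sum_nonneg fun z _ => mul_nonneg (ih x z) (h z y)

private lemma restore_exp_entry_nonneg' {M : Matrix E E ℝ} (h : ∀ x y, 0 ≤ M x y) (x y : E) :
    0 ≤ exp M x y := by
  rw [restore_exp_entry]
  exact tsum_nonneg fun n => mul_nonneg (by positivity) (restore_pow_entry_nonneg h n x y)

/-- exp of a matrix with nonneg off-diagonal entries is entrywise nonneg -/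
private lemma restore_exp_entry_nonneg {M : Matrix E E ℝ} (h : ∀ x y, x ≠ y → 0 ≤ M x y)
    (x y : E) : 0 ≤ exp M x y := by
  set c : ℝ := ∑ z, |M z z| with hc
  have hdiag : ∀ z, 0 ≤ M z z + c := by
    intro z
    have h1 : -M z z ≤ |M z z| := neg_le_abs _
    have h2 : |M z z| ≤ c := Finset.single_le_sum (fun i _ => abs_nonneg (M i i)) (Finset.mem_univ z)
    linarith
  have hsplit : M = (-c) • (1 : Matrix E E ℝ) + (M + c • 1) := by ring_nf; ext i j; simp
  have hcomm : Commute ((-c) • (1 : Matrix E E ℝ)) (M + c • 1) := by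
    apply Commute.smul_left
    exact (Commute.one_left _)
  rw [hsplit, Matrix.exp_add_of_commute _ _ hcomm, restore_exp_smul_one]
  rw [Matrix.smul_mul, Matrix.one_mul, Matrix.smul_apply]
  apply mul_nonneg (Real.exp_nonneg _)
  apply restore_exp_entry_nonneg'
  intro i j
  by_cases hij : i = j
  · subst hij; simpa [Matrix.one_apply] using hdiag i
  · simpa [Matrix.one_apply, hij] using h i j hij

/-- row sums of the matrix exponential, from a right eigenvector of ones -/
private lemma restore_exp_rowsum {M : Matrix E E ℝ} {r : ℝ}
    (h : M *ᵥ (fun _ => (1:ℝ)) = r • (fun _ => (1:ℝ))) :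
    exp M *ᵥ (fun _ => (1:ℝ)) = Real.exp r • (fun _ => (1:ℝ)) := by
  have hpow : ∀ n : ℕ, M ^ n *ᵥ (fun _ => (1:ℝ)) = r ^ n • (fun _ => (1:ℝ)) := by
    intro n
    induction n with
    | zero => simp
    | succ n ih =>
      rw [pow_succ, ← Matrix.mulVec_mulVec, h, Matrix.mulVec_smul, ih, smul_smul, ← pow_succ']
  rw [restore_mulVec_exp]
  have hsum : Summable (fun n : ℕ => (n.factorial : ℝ)⁻¹ • r ^ n) :=
    expSeries_summable' (𝕂 := ℝ) r
  calc ∑' n : ℕ, (n.factorial : ℝ)⁻¹ • (M ^ n *ᵥ (fun _ => (1:ℝ)))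
      = ∑' n : ℕ, ((n.factorial : ℝ)⁻¹ • r ^ n) • (fun _ => (1:ℝ) : E → ℝ) := by
        exact tsum_congr fun n => by rw [hpow n, smul_smul]; rfl
    _ = (∑' n : ℕ, (n.factorial : ℝ)⁻¹ • r ^ n) • (fun _ => (1:ℝ) : E → ℝ) := by
        exact (((1 : ℝ →L[ℝ] ℝ).smulRight (fun _ => (1:ℝ) : E → ℝ)).map_tsum hsum).symm
    _ = Real.exp r • (fun _ => (1:ℝ) : E → ℝ) := by
        rw [Real.exp_eq_exp_ℝ, exp_eq_tsum ℝ]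

private lemma restore_vecMul_smulMat {E : Type*} [Fintype E] (w : E → ℝ) (c : ℝ)
    (M : Matrix E E ℝ) : w ᵥ* (c • M) = c • (w ᵥ* M) := by
  ext j
  simp [Matrix.vecMul, dotProduct, Finset.mul_sum, mul_left_comm]

end RestoreHelpers

theorem finite_jump_restore_uniformly_ergodic
    {E : Type*} [Fintype E] [DecidableEq E] [Nonempty E]
    (Q : Matrix E E ℝ)
    (hQoff : ∀ x y, x ≠ y → 0 ≤ Q x y)
    (hQrow : ∀ x, ∑ y, Q x y = 0)
    (μ : E → ℝ) (hμnonneg : ∀ x, 0 ≤ μ x) (hμsum : ∑ x, μ x = 1)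
    (κ : E → ℝ) (κlow : ℝ) (hκlow : 0 < κlow) (hκ : ∀ x, κlow ≤ κ x)
    (L : Matrix E E ℝ)
    (hL : ∀ x y, L x y = Q x y + κ x * (μ y - if x = y then 1 else 0)) :
    ∃ π : E → ℝ, (∀ x, 0 ≤ π x) ∧ (∑ x, π x = 1) ∧
      (∀ t : ℝ, 0 ≤ t → ∀ y, ∑ x, π x * NormedSpace.exp (t • L) x y = π y) ∧
      (∀ ν : E → ℝ, (∀ x, 0 ≤ ν x) → (∑ x, ν x = 1) →
        ∀ t : ℝ, 0 ≤ t →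
          ∑ y, |(∑ x, ν x * NormedSpace.exp (t • L) x y) - π y|
            ≤ 2 * Real.exp (-t * κlow)) := by
  classical
  -- notation
  set P : Matrix E E ℝ := Matrix.of (fun _ y => μ y) with hP
  set A : Matrix E E ℝ := L - κlow • P with hA
  -- basic row-sum facts
  have hLrow : ∀ x, ∑ y, L x y = 0 := by
    intro x
    have he : ∀ y, L x y = Q x y + κ x * μ y - κ x * (if x = y then (1:ℝ) else 0) :=
      fun y => by rw [hL]; ring
    rw [Finset.sum_congr rfl fun y _ => he y, Finset.sum_sub_distrib,
      Finset.sum_add_distrib, ← Finset.mul_sum, ← Finset.mul_sum, hμsum, hQrow]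
    simp
  have hAentry : ∀ x y, A x y = L x y - κlow * μ y := by
    intro x y; simp [hA, hP]
  have hArow : ∀ x, ∑ y, A x y = -κlow := by
    intro x
    simp only [hAentry, Finset.sum_sub_distrib, hLrow, ← Finset.mul_sum, hμsum]
    ring
  have hLoff : ∀ x y, x ≠ y → 0 ≤ L x y := by
    intro x y hxy
    rw [hL, if_neg hxy]
    have := hκ x
    have := hμnonneg y
    have := hQoff x y hxy
    nlinarith
  have hAoff : ∀ x y, x ≠ y → 0 ≤ A x y := by
    intro x y hxy
    rw [hAentry, hL, if_neg hxy]
    have := hκ x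
    have := hμnonneg y
    have := hQoff x y hxy
    nlinarith
  have hL1 : L *ᵥ (fun _ => (1:ℝ)) = (0:ℝ) • (fun _ => (1:ℝ)) := by
    ext x
    simp [Matrix.mulVec, dotProduct, hLrow x]
  have hA1 : A *ᵥ (fun _ => (1:ℝ)) = (-κlow) • (fun _ => (1:ℝ)) := by
    ext x
    simp [Matrix.mulVec, dotProduct, hArow x]
  -- row sums of exp (t • L) are 1, entries nonneg, for t ≥ 0
  have hexpLrow : ∀ t : ℝ, ∀ x, ∑ y, NormedSpace.exp (t • L) x y = 1 := by
    intro t x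
    have h1 : (t • L) *ᵥ (fun _ => (1:ℝ)) = (t * 0) • (fun _ => (1:ℝ)) := by
      rw [Matrix.smul_mulVec, hL1, smul_smul]
    have := congrFun (restore_exp_rowsum h1) x
    simpa [Matrix.mulVec, dotProduct] using this
  have hexpLpos : ∀ t : ℝ, 0 ≤ t → ∀ x y, 0 ≤ NormedSpace.exp (t • L) x y := by
    intro t ht x y
    exact restore_exp_entry_nonneg
      (fun x y hxy => by
        simpa using mul_nonneg ht (hLoff x y hxy)) x y
  have hexpArow : ∀ t : ℝ, ∀ x, ∑ y, NormedSpace.exp (t • A) x y = Real.exp (-t * κlow) := by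
    intro t x
    have h1 : (t • A) *ᵥ (fun _ => (1:ℝ)) = (t * -κlow) • (fun _ => (1:ℝ)) := by
      rw [Matrix.smul_mulVec, hA1, smul_smul]
    have := congrFun (restore_exp_rowsum h1) x
    simp only [Pi.smul_apply, smul_eq_mul, mul_one] at this
    have h2 : t * -κlow = -t * κlow := by ring
    rw [← h2]
    simpa [Matrix.mulVec, dotProduct] using this
  have hexpApos : ∀ t : ℝ, 0 ≤ t → ∀ x y, 0 ≤ NormedSpace.exp (t • A) x y := by
    intro t ht x y
    exact restore_exp_entry_nonneg
      (fun x y hxy => by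
        simpa using mul_nonneg ht (hAoff x y hxy)) x y
  -- sum-zero vectors: L and A act identically
  have hsum_vecMul : ∀ v : E → ℝ, (∑ x, v x = 0) → ∑ y, (v ᵥ* L) y = 0 := by
    intro v hv
    simp only [Matrix.vecMul, dotProduct]
    rw [Finset.sum_comm]
    simp [← Finset.mul_sum, hLrow]
  have hvLA : ∀ v : E → ℝ, (∑ x, v x = 0) → v ᵥ* L = v ᵥ* A := by
    intro v hv
    ext y
    simp only [Matrix.vecMul, dotProduct, hAentry]
    have he : ∀ x, v x * (L x y - κlow * μ y) = v x * L x y - (κlow * μ y) * v x :=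
      fun x => by ring
    rw [Finset.sum_congr rfl fun x _ => he x, Finset.sum_sub_distrib,
      ← Finset.mul_sum, hv, mul_zero, sub_zero]
  -- powers agree on sum-zero vectors
  have hpowLA : ∀ n : ℕ, ∀ v : E → ℝ, (∑ x, v x = 0) → v ᵥ* L ^ n = v ᵥ* A ^ n := by
    intro n
    induction n with
    | zero => intro v hv; rfl
    | succ n ih =>
      intro v hv
      rw [pow_succ', pow_succ', ← Matrix.vecMul_vecMul, ← Matrix.vecMul_vecMul,
        ← hvLA v hv, ih _ (hsum_vecMul v hv)]
  -- THE KEY CONTRACTION LEMMA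
  have key : ∀ w : E → ℝ, (∑ x, w x = 0) → ∀ t : ℝ, 0 ≤ t →
      ∑ y, |(w ᵥ* NormedSpace.exp (t • L)) y| ≤ (∑ x, |w x|) * Real.exp (-t * κlow) := by
    intro w hw t ht
    have hswap : w ᵥ* NormedSpace.exp (t • L) = w ᵥ* NormedSpace.exp (t • A) := by
      rw [restore_vecMul_exp, restore_vecMul_exp]
      refine tsum_congr fun n => ?_
      congr 1
      rw [smul_pow, smul_pow, restore_vecMul_smulMat, restore_vecMul_smulMat,
        hpowLA n w hw]
    rw [hswap]
    have hbound : ∀ y, |(w ᵥ* NormedSpace.exp (t • A)) y|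
        ≤ ∑ x, |w x| * NormedSpace.exp (t • A) x y := by
      intro y
      refine (Finset.abs_sum_le_sum_abs _ _).trans ?_
      refine Finset.sum_le_sum fun x _ => ?_
      rw [abs_mul]
      exact mul_le_mul_of_nonneg_left (le_of_eq (abs_of_nonneg (hexpApos t ht x y)))
        (abs_nonneg _)
    calc ∑ y, |(w ᵥ* NormedSpace.exp (t • A)) y|
        ≤ ∑ y, ∑ x, |w x| * NormedSpace.exp (t • A) x y :=
          Finset.sum_le_sum fun y _ => hbound y
      _ = ∑ x, |w x| * ∑ y, NormedSpace.exp (t • A) x y := by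
          rw [Finset.sum_comm]
          exact Finset.sum_congr rfl fun x _ => by rw [Finset.mul_sum]
      _ = (∑ x, |w x|) * Real.exp (-t * κlow) := by
          rw [Finset.sum_mul]
          exact Finset.sum_congr rfl fun x _ => by rw [hexpArow t x]
  -- exp (t•L) preserves probability vectors
  have hprob : ∀ ν : E → ℝ, (∀ x, 0 ≤ ν x) → (∑ x, ν x = 1) → ∀ t : ℝ, 0 ≤ t →
      (∀ y, 0 ≤ (ν ᵥ* NormedSpace.exp (t • L)) y) ∧
      (∑ y, (ν ᵥ* NormedSpace.exp (t • L)) y = 1) := by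
    intro ν hν hνs t ht
    refine ⟨fun y => Finset.sum_nonneg fun x _ => mul_nonneg (hν x) (hexpLpos t ht x y), ?_⟩
    simp only [Matrix.vecMul, dotProduct]
    rw [Finset.sum_comm]
    calc ∑ x, ∑ y, ν x * NormedSpace.exp (t • L) x y
        = ∑ x, ν x * ∑ y, NormedSpace.exp (t • L) x y :=
          Finset.sum_congr rfl fun x _ => (Finset.mul_sum _ _ _).symm
      _ = 1 := by
          simp only [hexpLrow t, mul_one]
          exact hνs
  -- ℓ¹ bound between two evolved probability vectors
  have hdiff : ∀ ν ν' : E → ℝ, (∀ x, 0 ≤ ν x) → (∑ x, ν x = 1) →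
      (∀ x, 0 ≤ ν' x) → (∑ x, ν' x = 1) → ∀ s : ℝ, 0 ≤ s →
      ∑ y, |(ν ᵥ* NormedSpace.exp (s • L)) y - (ν' ᵥ* NormedSpace.exp (s • L)) y|
        ≤ 2 * Real.exp (-s * κlow) := by
    intro ν ν' hν hνs hν' hν's s hs
    have hw : ∑ x, (ν - ν') x = 0 := by
      simp only [Pi.sub_apply]
      rw [Finset.sum_sub_distrib, hνs, hν's, sub_self]
    have h1 := key (ν - ν') hw s hs
    rw [Matrix.sub_vecMul] at h1
    have h2 : ∑ x, |(ν - ν') x| ≤ 2 := by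
      calc ∑ x, |(ν - ν') x| ≤ ∑ x, (ν x + ν' x) := by
            refine Finset.sum_le_sum fun x _ => ?_
            rw [Pi.sub_apply]
            calc |ν x - ν' x| ≤ |ν x| + |ν' x| := abs_sub _ _
              _ = ν x + ν' x := by rw [abs_of_nonneg (hν x), abs_of_nonneg (hν' x)]
        _ = 2 := by rw [Finset.sum_add_distrib, hνs, hν's]; norm_num
    calc ∑ y, |(ν ᵥ* NormedSpace.exp (s • L)) y - (ν' ᵥ* NormedSpace.exp (s • L)) y|
        ≤ (∑ x, |(ν - ν') x|) * Real.exp (-s * κlow) := by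
          simpa using h1
      _ ≤ 2 * Real.exp (-s * κlow) :=
          mul_le_mul_of_nonneg_right h2 (Real.exp_nonneg _)
  -- turn the ℓ¹ bound into a sup-metric bound
  have hdist : ∀ ν ν' : E → ℝ, (∀ x, 0 ≤ ν x) → (∑ x, ν x = 1) →
      (∀ x, 0 ≤ ν' x) → (∑ x, ν' x = 1) → ∀ s : ℝ, 0 ≤ s →
      dist (ν ᵥ* NormedSpace.exp (s • L)) (ν' ᵥ* NormedSpace.exp (s • L))
        ≤ 2 * Real.exp (-s * κlow) := by
    intro ν ν' hν hνs hν' hν's s hs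
    rw [dist_pi_le_iff (by positivity)]
    intro y
    rw [Real.dist_eq]
    exact le_trans (Finset.single_le_sum
      (f := fun y => |(ν ᵥ* NormedSpace.exp (s • L)) y - (ν' ᵥ* NormedSpace.exp (s • L)) y|)
      (fun y _ => abs_nonneg _) (Finset.mem_univ y)) (hdiff ν ν' hν hνs hν' hν's s hs)
  -- the semigroup property
  have hsg : ∀ s u : ℝ, NormedSpace.exp (s • L) * NormedSpace.exp (u • L)
      = NormedSpace.exp ((s + u) • L) := by
    intro s u
    rw [add_smul, Matrix.exp_add_of_commute _ _
      (((Commute.refl L).smul_left s).smul_right u)]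
  -- the approximating sequence
  set g : ℕ → (E → ℝ) := fun n => μ ᵥ* NormedSpace.exp ((n : ℝ) • L) with hgdef
  have hgprob : ∀ n : ℕ, (∀ y, 0 ≤ g n y) ∧ (∑ y, g n y = 1) :=
    fun n => hprob μ hμnonneg hμsum _ (Nat.cast_nonneg n)
  have hgshift : ∀ (t : ℝ) (n : ℕ),
      g n ᵥ* NormedSpace.exp (t • L)
        = (μ ᵥ* NormedSpace.exp (t • L)) ᵥ* NormedSpace.exp ((n : ℝ) • L) := by
    intro t n
    rw [hgdef]
    rw [Matrix.vecMul_vecMul, Matrix.vecMul_vecMul, hsg, hsg, add_comm]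
  -- Cauchy sequence
  have hcauchy : CauchySeq g := by
    refine cauchySeq_of_le_geometric (Real.exp (-κlow)) 2 (Real.exp_lt_one_iff.2 (by linarith))
      fun n => ?_
    have hg1 : g (n + 1) = (μ ᵥ* NormedSpace.exp ((1:ℝ) • L)) ᵥ* NormedSpace.exp ((n : ℝ) • L) := by
      rw [← hgshift 1 n, hgdef]
      push_cast
      rw [Matrix.vecMul_vecMul, hsg, add_comm]
    have hν' := hprob μ hμnonneg hμsum 1 zero_le_one
    have hb := hdist μ (μ ᵥ* NormedSpace.exp ((1:ℝ) • L)) hμnonneg hμsum hν'.1 hν'.2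
      (n : ℝ) (Nat.cast_nonneg n)
    rw [← hg1] at hb
    refine hb.trans (le_of_eq ?_)
    rw [← Real.exp_nat_mul]
    ring_nf
  obtain ⟨π, hπ⟩ := cauchySeq_tendsto_of_complete hcauchy
  -- the shifted sequences have the same limit
  have hgeo0 : Filter.Tendsto (fun n : ℕ => 2 * Real.exp (-(n : ℝ) * κlow))
      Filter.atTop (𝓝 0) := by
    have h1 : (fun n : ℕ => 2 * Real.exp (-(n : ℝ) * κlow))
        = fun n : ℕ => 2 * (Real.exp (-κlow)) ^ n := by
      funext n
      rw [← Real.exp_nat_mul]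
      ring_nf
    rw [h1]
    have := (tendsto_pow_atTop_nhds_zero_of_lt_one (Real.exp_nonneg (-κlow))
      (Real.exp_lt_one_iff.2 (by linarith))).const_mul (2:ℝ)
    simpa using this
  have hshiftlim : ∀ t : ℝ, 0 ≤ t →
      Filter.Tendsto (fun n : ℕ => (μ ᵥ* NormedSpace.exp (t • L)) ᵥ* NormedSpace.exp ((n : ℝ) • L))
        Filter.atTop (𝓝 π) := by
    intro t ht
    have hν' := hprob μ hμnonneg hμsum t ht
    refine Filter.Tendsto.congr_dist (f₁ := g) hπ ?_
    refine squeeze_zero (fun n => dist_nonneg) (fun n => ?_) hgeo0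
    rw [dist_comm]
    exact hdist (μ ᵥ* NormedSpace.exp (t • L)) μ hν'.1 hν'.2 hμnonneg hμsum
      (n : ℝ) (Nat.cast_nonneg n)
  -- invariance of π
  have hinv : ∀ t : ℝ, 0 ≤ t → π ᵥ* NormedSpace.exp (t • L) = π := by
    intro t ht
    have hcont : Continuous fun v : E → ℝ => v ᵥ* NormedSpace.exp (t • L) := by
      have := (NormedSpace.exp (t • L)).vecMulLinear.continuous_of_finiteDimensional
      exact this
    have h1 : Filter.Tendsto (fun n : ℕ => g n ᵥ* NormedSpace.exp (t • L))
        Filter.atTop (𝓝 (π ᵥ* NormedSpace.exp (t • L))) :=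
      (hcont.tendsto π).comp hπ
    have h2 : Filter.Tendsto (fun n : ℕ => g n ᵥ* NormedSpace.exp (t • L))
        Filter.atTop (𝓝 π) := by
      have := hshiftlim t ht
      refine this.congr fun n => (hgshift t n).symm
    exact tendsto_nhds_unique h1 h2
  -- properties of π
  have hπpt : ∀ y, Filter.Tendsto (fun n : ℕ => g n y) Filter.atTop (𝓝 (π y)) :=
    fun y => tendsto_pi_nhds.mp hπ y
  have hπnonneg : ∀ y, 0 ≤ π y :=
    fun y => ge_of_tendsto' (hπpt y) fun n => (hgprob n).1 y
  have hπsum : ∑ y, π y = 1 := by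
    have h1 : Filter.Tendsto (fun n : ℕ => ∑ y, g n y) Filter.atTop (𝓝 (∑ y, π y)) :=
      tendsto_finset_sum _ fun y _ => hπpt y
    have h2 : (fun n : ℕ => ∑ y, g n y) = fun _ => (1:ℝ) := funext fun n => (hgprob n).2
    rw [h2] at h1
    exact tendsto_nhds_unique h1 tendsto_const_nhds
  refine ⟨π, hπnonneg, hπsum, ?_, ?_⟩
  · intro t ht y
    have := congrFun (hinv t ht) y
    simpa [Matrix.vecMul, dotProduct] using this
  · intro ν hν hνs t ht
    have hw : ∑ x, (ν - π) x = 0 := by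
      simp only [Pi.sub_apply]
      rw [Finset.sum_sub_distrib, hνs, hπsum, sub_self]
    have h1 := key (ν - π) hw t ht
    rw [Matrix.sub_vecMul, hinv t ht] at h1
    have h2 : ∑ x, |(ν - π) x| ≤ 2 := by
      calc ∑ x, |(ν - π) x| ≤ ∑ x, (ν x + π x) := by
            refine Finset.sum_le_sum fun x _ => ?_
            rw [Pi.sub_apply]
            calc |ν x - π x| ≤ |ν x| + |π x| := abs_sub _ _
              _ = ν x + π x := by rw [abs_of_nonneg (hν x), abs_of_nonneg (hπnonneg x)]
        _ = 2 := by rw [Finset.sum_add_distrib, hνs, hπsum]; norm_num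
    calc ∑ y, |(∑ x, ν x * NormedSpace.exp (t • L) x y) - π y|
        ≤ (∑ x, |(ν - π) x|) * Real.exp (-t * κlow) := by
          simpa [Matrix.vecMul, dotProduct] using h1
      _ ≤ 2 * Real.exp (-t * κlow) :=
          mul_le_mul_of_nonneg_right h2 (Real.exp_nonneg _)
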